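/- If J : ℝⁿ → ℝ is differentiable with ξ-Lipschitz gradient and bounded below by J(u★), then for gradient descent with step 1/ξ starting from u⁰, the sum ∑_{ℓ=0}^{∞} ‖∇J(u_ℓ)‖² is at most 2ξ·(J(u⁰) - J(u★)). -/

import Mathlib

open intervalIntegral in
lemma descent_step {n : ℕ} (J : EuclideanSpace ℝ (Fin n) → ℝ)
    (ξ : ℝ) (hξ : 0 < ξ) (hJ : Differentiable ℝ J)
    (hLip : ∀ x y, ‖gradient J x - gradient J y‖ ≤ ξ * ‖x - y‖)
    (x : EuclideanSpace ℝ (Fin n)) :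
    J (x - (1 / ξ) • gradient J x) ≤ J x - (1 / (2 * ξ)) * ‖gradient J x‖ ^ 2 := by
  set v : EuclideanSpace ℝ (Fin n) := -((1 / ξ) • gradient J x) with hv
  have hxy : x - (1 / ξ) • gradient J x = x + v := by rw [hv]; abel
  -- gradient is continuous
  have hgradcont : Continuous (gradient J) := by
    have : LipschitzWith ⟨ξ, hξ.le⟩ (gradient J) :=
      LipschitzWith.of_dist_le_mul fun a b => by
        rw [dist_eq_norm, dist_eq_norm]; exact hLip a b
    exact this.continuous
  have hderiv : ∀ t : ℝ, HasDerivAt (fun t : ℝ => J (x + t • v))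
      (inner ℝ (gradient J (x + t • v)) v : ℝ) t := by
    intro t
    have hc : HasDerivAt (fun t : ℝ => x + t • v) v t := by
      simpa using ((hasDerivAt_id t).smul_const v).const_add x
    have hg : HasGradientAt J (gradient J (x + t • v)) (x + t • v) :=
      (hJ _).hasGradientAt
    have := hg.hasFDerivAt.comp_hasDerivAt t hc
    simpa [InnerProductSpace.toDual_apply_apply, Function.comp_def] using this
  have hcont : Continuous fun t : ℝ => (inner ℝ (gradient J (x + t • v)) v : ℝ) := by
    exact (Continuous.inner (hgradcont.comp (continuous_const.add (continuous_id.smul continuous_const))) continuous_const)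
  have hint : J (x + v) - J x = ∫ t in (0:ℝ)..1, (inner ℝ (gradient J (x + t • v)) v : ℝ) := by
    rw [intervalIntegral.integral_eq_sub_of_hasDerivAt (fun t _ => hderiv t)
      (hcont.intervalIntegrable 0 1)]
    simp
  have hbound : ∀ t ∈ Set.Icc (0:ℝ) 1,
      (inner ℝ (gradient J (x + t • v)) v : ℝ) ≤ (inner ℝ (gradient J x) v : ℝ) + t * (ξ * ‖v‖ ^ 2) := by
    intro t ht
    have h1 : (inner ℝ (gradient J (x + t • v)) v : ℝ) - inner ℝ (gradient J x) v
        = inner ℝ (gradient J (x + t • v) - gradient J x) v := by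
      rw [inner_sub_left]
    have h2 : (inner ℝ (gradient J (x + t • v) - gradient J x) v : ℝ)
        ≤ ‖gradient J (x + t • v) - gradient J x‖ * ‖v‖ := real_inner_le_norm _ _
    have h3 : ‖gradient J (x + t • v) - gradient J x‖ ≤ ξ * (t * ‖v‖) := by
      have := hLip (x + t • v) x
      simpa [norm_smul, abs_of_nonneg ht.1] using this
    nlinarith [norm_nonneg v, mul_le_mul_of_nonneg_right h3 (norm_nonneg v)]
  have hle : J (x + v) - J x ≤ (inner ℝ (gradient J x) v : ℝ) + ξ / 2 * ‖v‖ ^ 2 := by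
    rw [hint]
    have : (∫ t in (0:ℝ)..1, (inner ℝ (gradient J (x + t • v)) v : ℝ))
        ≤ ∫ t in (0:ℝ)..1, ((inner ℝ (gradient J x) v : ℝ) + t * (ξ * ‖v‖ ^ 2)) := by
      apply intervalIntegral.integral_mono_on zero_le_one (hcont.intervalIntegrable 0 1)
        ((continuous_const.add (continuous_id.mul continuous_const)).intervalIntegrable 0 1) hbound
    refine this.trans_eq ?_
    rw [intervalIntegral.integral_add (intervalIntegrable_const)
      (((continuous_mul_right _)).intervalIntegrable 0 1)]
    rw [intervalIntegral.integral_mul_const, integral_id]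
    simp
    ring
  have hvnorm : ‖v‖ ^ 2 = (1 / ξ) ^ 2 * ‖gradient J x‖ ^ 2 := by
    rw [hv, norm_neg, norm_smul]
    simp [abs_of_nonneg (le_of_lt (by positivity : (0:ℝ) < 1/ξ)), mul_pow]
  have hinner : (inner ℝ (gradient J x) v : ℝ) = -(1 / ξ) * ‖gradient J x‖ ^ 2 := by
    rw [hv, inner_neg_right, real_inner_smul_right, real_inner_self_eq_norm_sq]
    ring
  rw [hxy]
  have hξ' : ξ ≠ 0 := hξ.ne'
  rw [hinner, hvnorm] at hle
  have : (inner ℝ (gradient J x) v : ℝ) + ξ / 2 * ‖v‖ ^ 2 = -(1 / (2 * ξ)) * ‖gradient J x‖ ^ 2 := by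
    rw [hinner, hvnorm]; field_simp; ring
  nlinarith [hle]

theorem gradient_descent_sum_sq_grad_bound {n : ℕ} (J : EuclideanSpace ℝ (Fin n) → ℝ)
    (ξ : ℝ) (hξ : 0 < ξ) (hJ : Differentiable ℝ J)
    (hLip : ∀ x y, ‖gradient J x - gradient J y‖ ≤ ξ * ‖x - y‖)
    (ustar : EuclideanSpace ℝ (Fin n)) (hbdd : ∀ u, J ustar ≤ J u)
    (u : ℕ → EuclideanSpace ℝ (Fin n))
    (hu : ∀ k, u (k + 1) = u k - (1 / ξ) • gradient J (u k)) :
    ∑' ℓ : ℕ, ‖gradient J (u ℓ)‖ ^ 2 ≤ 2 * ξ * (J (u 0) - J ustar) := by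
  have hstep : ∀ k, ‖gradient J (u k)‖ ^ 2 ≤ 2 * ξ * (J (u k) - J (u (k + 1))) := by
    intro k
    have := descent_step J ξ hξ hJ hLip (u k)
    rw [← hu k] at this
    have h2ξ : (0:ℝ) < 2 * ξ := by linarith
    have h' : 1 / (2 * ξ) * ‖gradient J (u k)‖ ^ 2 ≤ J (u k) - J (u (k + 1)) := by linarith
    rw [div_mul_eq_mul_div, div_le_iff₀ h2ξ, one_mul] at h'
    nlinarith
  have hpartial : ∀ N, ∑ i ∈ Finset.range N, ‖gradient J (u i)‖ ^ 2
      ≤ 2 * ξ * (J (u 0) - J (u N)) := by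
    intro N
    induction N with
    | zero => simp
    | succ N ih =>
      rw [Finset.sum_range_succ]
      have := hstep N
      nlinarith
  apply Real.tsum_le_of_sum_range_le (fun k => by positivity)
  intro N
  have := hbdd (u N)
  have := hpartial N
  nlinarith
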